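/- Let (E, A) and (F, B) be Lie pseudoalgebras and ψ : A → B an algebra morphism. An element Σᵢ Xᵢ ⊗_A bᵢ + Y of (E ⊗_A B) ⊕ F belongs to the ψ-sum E ⊕_ψ F if and only if Σᵢ ψ(θ_E(Xᵢ)(a)) bᵢ = θ_F(Y)(ψ(a)) for all a ∈ A. -/

import Mathlib

open TensorProduct

/-- Description of the ψ-sum.  Here `ψ = algebraMap A B`,
`D = (E ⊗_K B) ⊕ (A ⊗_K F)` is the direct sum Lie pseudoalgebra over `A ⊗_K B`
(with anchor `anc`), `J = Ker(ψ̃ : A⊗B → B)`, and `π` is the canonical identification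
`D ⊗_{A⊗B} B → (E ⊗_A B) ⊕ F` (the base change `E ⊗_A B` is realised as `B ⊗[A] E`).
An element `Σᵢ Xᵢ ⊗_A bᵢ + Y` of `(E ⊗_A B) ⊕ F` belongs to the ψ-sum `E ⊕_ψ F`
(that is, lies in the image under `π` of `D^J = {d | anc(d)(J) ⊆ J}`) if and only if
`Σᵢ ψ(θ_E(Xᵢ)(a)) bᵢ = θ_F(Y)(ψ(a))` for all `a ∈ A`. -/
theorem mem_psi_sum_iff
    (K A B E F : Type*) [Field K] [CommRing A] [CommRing B]
    [Algebra K A] [Algebra K B] [Algebra A B] [IsScalarTower K A B]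
    [LieRing E] [Module K E] [LieAlgebra K E] [Module A E] [IsScalarTower K A E]
    [LieRing F] [Module K F] [LieAlgebra K F] [Module B F] [IsScalarTower K B F]
    (θE : E →ₗ[A] Derivation K A A)
    (hθE : ∀ X Y : E, θE ⁅X, Y⁆ = ⁅θE X, θE Y⁆)
    (hLeibE : ∀ (X Y : E) (a : A), ⁅X, a • Y⁆ = a • ⁅X, Y⁆ + θE X a • Y)
    (θF : F →ₗ[B] Derivation K B B)
    (hθF : ∀ X Y : F, θF ⁅X, Y⁆ = ⁅θF X, θF Y⁆)
    (hLeibF : ∀ (X Y : F) (b : B), ⁅X, b • Y⁆ = b • ⁅X, Y⁆ + θF X b • Y)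
    -- the anchor of the direct sum Lie pseudoalgebra D over A ⊗_K B
    (anc : ((E ⊗[K] B) × (A ⊗[K] F)) → (A ⊗[K] B) →ₗ[K] (A ⊗[K] B))
    (hancadd : ∀ x y, anc (x + y) = anc x + anc y)
    (hanc : ∀ (X : E) (b : B) (a : A) (Y : F) (a' : A) (b' : B),
      anc (X ⊗ₜ b, a ⊗ₜ Y) (a' ⊗ₜ b') =
        (θE X a') ⊗ₜ (b * b') + (a * a') ⊗ₜ (θF Y b'))
    -- the multiplication map ψ̃ : A ⊗_K B → B
    (ψt : (A ⊗[K] B) →ₐ[K] B)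
    (hψt : ∀ (a : A) (b : B), ψt (a ⊗ₜ b) = algebraMap A B a * b)
    -- the canonical projection π : D → (E ⊗_A B) ⊕ F
    (π : ((E ⊗[K] B) × (A ⊗[K] F)) → (B ⊗[A] E) × F)
    (hπadd : ∀ x y, π (x + y) = π x + π y)
    (hπ : ∀ (X : E) (b : B) (a : A) (Y : F),
      π (X ⊗ₜ b, a ⊗ₜ Y) = (b ⊗ₜ X, algebraMap A B a • Y))
    -- the pairing μ a (Σ bᵢ ⊗ Xᵢ) = Σ ψ(θ_E(Xᵢ)(a)) bᵢ
    (μ : A → (B ⊗[A] E) →ₗ[B] B)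
    (hμ : ∀ (a : A) (b : B) (X : E), μ a (b ⊗ₜ X) = algebraMap A B (θE X a) * b)
    (t : (B ⊗[A] E) × F) :
    (∃ d : (E ⊗[K] B) × (A ⊗[K] F),
        (∀ j ∈ RingHom.ker (ψt : A ⊗[K] B →+* B),
          anc d j ∈ RingHom.ker (ψt : A ⊗[K] B →+* B)) ∧
        π d = t) ↔
      (∀ a : A, μ a t.1 = θF t.2 (algebraMap A B a)) := by
  have hπ0 : π 0 = 0 := by
    have h := hπadd 0 0
    rw [add_zero] at h
    exact left_eq_add.mp h
  have hanc0 : anc 0 = 0 := by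
    have h := hancadd 0 0
    rw [add_zero] at h
    exact left_eq_add.mp h
  -- the key computation
  have key : ∀ (d : (E ⊗[K] B) × (A ⊗[K] F)) (a : A) (b : B),
      ψt (anc d (a ⊗ₜ[K] b)) - ψt (anc d ((1:A) ⊗ₜ[K] (algebraMap A B a * b)))
        = (μ a (π d).1 - θF (π d).2 (algebraMap A B a)) * b := by
    have hadd : ∀ d₁ d₂ : (E ⊗[K] B) × (A ⊗[K] F),
        (∀ (a : A) (b : B),
          ψt (anc d₁ (a ⊗ₜ[K] b)) - ψt (anc d₁ ((1:A) ⊗ₜ[K] (algebraMap A B a * b)))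
            = (μ a (π d₁).1 - θF (π d₁).2 (algebraMap A B a)) * b) →
        (∀ (a : A) (b : B),
          ψt (anc d₂ (a ⊗ₜ[K] b)) - ψt (anc d₂ ((1:A) ⊗ₜ[K] (algebraMap A B a * b)))
            = (μ a (π d₂).1 - θF (π d₂).2 (algebraMap A B a)) * b) →
        ∀ (a : A) (b : B),
          ψt (anc (d₁ + d₂) (a ⊗ₜ[K] b)) - ψt (anc (d₁ + d₂) ((1:A) ⊗ₜ[K] (algebraMap A B a * b)))
            = (μ a (π (d₁ + d₂)).1 - θF (π (d₁ + d₂)).2 (algebraMap A B a)) * b := by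
      intro d₁ d₂ h₁ h₂ a b
      rw [hancadd, hπadd]
      simp only [LinearMap.add_apply, map_add, Prod.fst_add, Prod.snd_add,
        Derivation.add_apply]
      linear_combination h₁ a b + h₂ a b
    have hE : ∀ u : E ⊗[K] B, ∀ (a : A) (b : B),
        ψt (anc (u, 0) (a ⊗ₜ[K] b)) - ψt (anc (u, 0) ((1:A) ⊗ₜ[K] (algebraMap A B a * b)))
          = (μ a (π (u, 0)).1 - θF (π (u, 0)).2 (algebraMap A B a)) * b := by
      intro u
      induction u using TensorProduct.induction_on with
      | zero =>
        intro a b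
        simp only [Prod.mk_zero_zero]
        simp [hanc0, hπ0]
      | tmul X b₀ =>
        intro a b
        rw [show (0 : A ⊗[K] F) = (1:A) ⊗ₜ[K] (0:F) from (tmul_zero _ _).symm,
          hanc, hanc, hπ]
        simp [hψt, hμ, mul_assoc]
      | add u₁ u₂ ih₁ ih₂ =>
        have h : ((u₁ + u₂ : E ⊗[K] B), (0 : A ⊗[K] F)) = (u₁, 0) + (u₂, 0) := by
          simp
        rw [h]
        exact hadd _ _ ih₁ ih₂
    have hF : ∀ v : A ⊗[K] F, ∀ (a : A) (b : B),
        ψt (anc (0, v) (a ⊗ₜ[K] b)) - ψt (anc (0, v) ((1:A) ⊗ₜ[K] (algebraMap A B a * b)))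
          = (μ a (π (0, v)).1 - θF (π (0, v)).2 (algebraMap A B a)) * b := by
      intro v
      induction v using TensorProduct.induction_on with
      | zero =>
        intro a b
        simp only [Prod.mk_zero_zero]
        simp [hanc0, hπ0]
      | tmul a₀ Y =>
        intro a b
        rw [show (0 : E ⊗[K] B) = (0:E) ⊗ₜ[K] (0:B) from (tmul_zero _ _).symm,
          hanc, hanc, hπ]
        simp only [map_zero, Derivation.zero_apply, zero_tmul, tmul_zero, zero_add,
          mul_one, one_mul, hψt, map_mul, Derivation.leibniz, smul_eq_mul,
          Derivation.coe_smul, Pi.smul_apply, map_smul, Derivation.smul_apply]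
        ring
      | add v₁ v₂ ih₁ ih₂ =>
        have h : ((0 : E ⊗[K] B), v₁ + v₂) = (0, v₁) + (0, v₂) := by
          simp
        rw [h]
        exact hadd _ _ ih₁ ih₂
    intro d
    have h : d = (d.1, 0) + (0, d.2) := by simp
    rw [h]
    exact hadd _ _ (hE d.1) (hF d.2)
  constructor
  · rintro ⟨d, hd, rfl⟩
    intro a
    have hj : (a ⊗ₜ[K] (1:B) - (1:A) ⊗ₜ[K] (algebraMap A B a)) ∈
        RingHom.ker (ψt : A ⊗[K] B →+* B) := by
      simp [RingHom.mem_ker, map_sub, hψt]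
    have h0 := hd _ hj
    rw [RingHom.mem_ker] at h0
    have h0' : ψt (anc d (a ⊗ₜ[K] (1:B))) -
        ψt (anc d ((1:A) ⊗ₜ[K] (algebraMap A B a))) = 0 := by
      rw [← map_sub, ← map_sub]
      exact h0
    have hk := key d a 1
    rw [mul_one, mul_one, h0'] at hk
    exact (sub_eq_zero.mp hk.symm)
  · intro h
    -- lift t.1
    have hlift : ∀ m : B ⊗[A] E, ∃ u : E ⊗[K] B, π (u, 0) = (m, 0) := by
      intro m
      induction m using TensorProduct.induction_on with
      | zero => exact ⟨0, by simp only [Prod.mk_zero_zero, hπ0]⟩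
      | tmul b X =>
        refine ⟨X ⊗ₜ[K] b, ?_⟩
        rw [show (0 : A ⊗[K] F) = (1:A) ⊗ₜ[K] (0:F) from (tmul_zero _ _).symm, hπ]
        simp
      | add m₁ m₂ ih₁ ih₂ =>
        obtain ⟨u₁, hu₁⟩ := ih₁
        obtain ⟨u₂, hu₂⟩ := ih₂
        refine ⟨u₁ + u₂, ?_⟩
        have : ((u₁ + u₂ : E ⊗[K] B), (0 : A ⊗[K] F)) = (u₁, 0) + (u₂, 0) := by simp
        rw [this, hπadd, hu₁, hu₂]
        simp
    obtain ⟨u, hu⟩ := hlift t.1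
    refine ⟨(u, (1:A) ⊗ₜ[K] t.2), ?_, ?_⟩
    · have hπd : π (u, (1:A) ⊗ₜ[K] t.2) = t := by
        have hsplit : ((u : E ⊗[K] B), (1:A) ⊗ₜ[K] t.2) = (u, 0) + (0, (1:A) ⊗ₜ[K] t.2) := by
          simp
        rw [hsplit, hπadd, hu]
        rw [show (0 : E ⊗[K] B) = (0:E) ⊗ₜ[K] (0:B) from (tmul_zero _ _).symm, hπ]
        simp
      intro j hj
      rw [RingHom.mem_ker] at hj ⊢
      have hx : ∀ x : A ⊗[K] B,
          ψt (anc (u, (1:A) ⊗ₜ[K] t.2) x) =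
            ψt (anc (u, (1:A) ⊗ₜ[K] t.2) ((1:A) ⊗ₜ[K] (ψt x))) := by
        intro x
        induction x using TensorProduct.induction_on with
        | zero => simp
        | tmul a b =>
          have hk := key (u, (1:A) ⊗ₜ[K] t.2) a b
          rw [hπd, h a] at hk
          rw [sub_self, zero_mul, sub_eq_zero] at hk
          rw [hk, hψt]
        | add x y ihx ihy =>
          rw [map_add, map_add, ihx, ihy, map_add, tmul_add, map_add, map_add]
      have hj' : ψt j = 0 := hj
      have hthis := hx j
      rw [hj'] at hthis
      have hfin : ψt ((anc (u, (1:A) ⊗ₜ[K] t.2)) j) = 0 := by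
        rw [hthis]; simp
      exact hfin
    · have hsplit : ((u : E ⊗[K] B), (1:A) ⊗ₜ[K] t.2) = (u, 0) + (0, (1:A) ⊗ₜ[K] t.2) := by
        simp
      rw [hsplit, hπadd, hu]
      rw [show (0 : E ⊗[K] B) = (0:E) ⊗ₜ[K] (0:B) from (tmul_zero _ _).symm, hπ]
      simp
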